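/- In the iterated construction A_r(ψ) (r ≥ 3) with state set Q_r = Q_{r-1} ∪ ((Q₂ \ {z₀}) × Q_{r-1}) and transition function δ_r as defined, if ψ is satisfiable under truth assignment τ, then the word c^{r-1}·v(τ)·c of length n + r synchronizes A_r(ψ) (sending every state to z₀). -/

import Mathlib

/-- The three-letter alphabet {a, b, c}. -/
inductive Letter3 where
  | a | b | c
deriving DecidableEq

/-- Extension of a transition function to words (left-to-right action). -/
def runW {Q A : Type*} (δ : Q → A → Q) : Q → List A → Q
  | q, [] => q
  | q, x :: w => runW δ (δ q x) w

/-- States of Berlinkov's automaton A(ψ) for a SAT instance with m clauses and n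
variables.  `q i j` encodes q_{i+1,j+1} (so `q ⟨m⟩ ⟨n⟩` is the state z₁),
`p i j` encodes p_{i+1,j+1}, and `z0` is the zero state. -/
inductive St (m n : ℕ) where
  | q : Fin (m + 1) → Fin (n + 1) → St m n
  | p : Fin (m + 1) → Fin (n + 1) → St m n
  | z0 : St m n
deriving DecidableEq

/-- The transition function of Berlinkov's automaton A(ψ).  `pos i j` means the
literal x_{j+1} occurs in clause c_{i+1}; `neg i j` means ¬x_{j+1} occurs there. -/
def St.delta {m n : ℕ} (pos neg : Fin m → Fin n → Bool) : St m n → Letter3 → St m n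
  | .q i j, .a =>
      if hj : (j : ℕ) < n then
        if hi : (i : ℕ) < m then
          if pos ⟨i, hi⟩ ⟨j, hj⟩ then .z0 else .q i ⟨(j : ℕ) + 1, by omega⟩
        else .q i ⟨(j : ℕ) + 1, by omega⟩
      else if (i : ℕ) < m then .z0 else .q i ⟨0, by omega⟩
  | .q i j, .b =>
      if hj : (j : ℕ) < n then
        if hi : (i : ℕ) < m then
          if neg ⟨i, hi⟩ ⟨j, hj⟩ then .z0 else .q i ⟨(j : ℕ) + 1, by omega⟩
        else .q i ⟨(j : ℕ) + 1, by omega⟩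
      else if (i : ℕ) < m then .z0 else .q i ⟨0, by omega⟩
  | .q i j, .c =>
      if (j : ℕ) < n then .q i ⟨0, by omega⟩
      else if (i : ℕ) < m then .q ⟨m, by omega⟩ ⟨0, by omega⟩ else .z0
  | .p i j, x =>
      if hj : (j : ℕ) < n then .p i ⟨(j : ℕ) + 1, by omega⟩
      else match x with
        | .c => .q i ⟨0, by omega⟩
        | _ => .z0
  | .z0, _ => .z0

/-- Clause c_{i+1} is satisfied by the truth assignment τ. -/
def clauseSat {m n : ℕ} (pos neg : Fin m → Fin n → Bool) (τ : Fin n → Bool) (i : Fin m) : Prop :=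
  ∃ j : Fin n, (pos i j = true ∧ τ j = true) ∨ (neg i j = true ∧ τ j = false)

/-- The word v(τ) ∈ {a,b}ⁿ encoding a truth assignment. -/
def encWord {n : ℕ} (τ : Fin n → Bool) : List Letter3 :=
  List.ofFn fun j : Fin n => if τ j then Letter3.a else Letter3.b

/-- Nonzero states of the base automaton A₂(ψ) = A(ψ). -/
abbrev St' (m n : ℕ) := {s : St m n // s ≠ St.z0}

/-- State sets of the iterated construction: `QIter m n k` is the state set of
A_{k+2}(ψ), so `QIter m n 0 = Q₂` and `Q_{r} = Q_{r-1} ⊕ (Q₂ \ {z₀}) × Q_{r-1}`. -/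
def QIter (m n : ℕ) : ℕ → Type
  | 0 => St m n
  | k + 1 => QIter m n k ⊕ (St' m n × QIter m n k)

/-- The zero state of A_{k+2}(ψ). -/
def z0Iter (m n : ℕ) : (k : ℕ) → QIter m n k
  | 0 => St.z0
  | k + 1 => Sum.inl (z0Iter m n k)

/-- The set {q_{i,n+1} : i ≤ m} ∪ {q_{m+1,j} : 2 ≤ j ≤ n} ∪ {z₁} of states whose
pairs drop to the second component when mapped to q_{m+1,1}. -/
def dropSet {m n : ℕ} : St m n → Prop
  | St.q i j => ((i : ℕ) < m ∧ (j : ℕ) = n) ∨ ((i : ℕ) = m ∧ 1 ≤ (j : ℕ))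
  | _ => False

instance {m n : ℕ} : DecidablePred (dropSet (m := m) (n := n)) := by
  intro s
  cases s <;> simp only [dropSet] <;> infer_instance

/-- The transition function δ_r of the iterated construction A_{k+2}(ψ). -/
def deltaIter {m n : ℕ} (pos neg : Fin m → Fin n → Bool) :
    (k : ℕ) → QIter m n k → Letter3 → QIter m n k
  | 0, s, d => St.delta pos neg s d
  | k + 1, Sum.inl s, d => Sum.inl (deltaIter pos neg k s d)
  | k + 1, Sum.inr (q', q''), d =>
      if ht : St.delta pos neg q'.val d = St.z0 then
        Sum.inl (z0Iter m n k)
      else if St.delta pos neg q'.val d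
            = St.q ⟨m, Nat.lt_succ_self m⟩ ⟨0, Nat.succ_pos n⟩ ∧ dropSet q'.val then
        Sum.inl q''
      else
        Sum.inr (⟨St.delta pos neg q'.val d, ht⟩, q'')

section IterAux

theorem runW_append {Q A : Type*} (δ : Q → A → Q) (s : Q) (u v : List A) :
    runW δ s (u ++ v) = runW δ (runW δ s u) v := by
  induction u generalizing s with
  | nil => rfl
  | cons x xs ih => exact ih (δ s x)

theorem runW_cons {Q A : Type*} (δ : Q → A → Q) (s : Q) (x : A) (w : List A) :
    runW δ s (x :: w) = runW δ (δ s x) w := rfl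

theorem runW_fix {Q A : Type*} (δ : Q → A → Q) (z : Q) (hz : ∀ d, δ z d = z) (w : List A) :
    runW δ z w = z := by
  induction w with
  | nil => rfl
  | cons x xs ih => simp only [runW, hz, ih]

theorem encWord_drop_n {n : ℕ} (τ : Fin n → Bool) : (encWord τ).drop n = [] := by
  apply List.drop_eq_nil_of_le
  simp [encWord]

theorem encWord_drop_lt {n : ℕ} (τ : Fin n → Bool) (t : ℕ) (ht : t < n) :
    (encWord τ).drop t
      = (if τ ⟨t, ht⟩ then Letter3.a else Letter3.b) :: (encWord τ).drop (t + 1) := by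
  rw [List.drop_eq_getElem_cons (by simpa [encWord] using ht)]
  simp [encWord]

variable {m n : ℕ} (pos neg : Fin m → Fin n → Bool)

theorem dq_c_lt (i : Fin (m+1)) (j : Fin (n+1)) (hj : (j : ℕ) < n) :
    St.delta pos neg (.q i j) .c = .q i ⟨0, Nat.succ_pos n⟩ := by
  simp [St.delta, hj]

theorem dq_c_hi (i : Fin (m+1)) (j : Fin (n+1)) (hj : ¬ (j : ℕ) < n) (hi : (i : ℕ) < m) :
    St.delta pos neg (.q i j) .c = .q ⟨m, Nat.lt_succ_self m⟩ ⟨0, Nat.succ_pos n⟩ := by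
  simp [St.delta, hj, hi]

theorem dq_c_z (i : Fin (m+1)) (j : Fin (n+1)) (hj : ¬ (j : ℕ) < n) (hi : ¬ (i : ℕ) < m) :
    St.delta pos neg (.q i j) .c = .z0 := by
  simp [St.delta, hj, hi]

theorem dq_a_lt (i : Fin (m+1)) (j : Fin (n+1)) (hj : (j : ℕ) < n) (hi : (i : ℕ) < m) :
    St.delta pos neg (.q i j) .a
      = if pos ⟨i, hi⟩ ⟨j, hj⟩ then .z0 else .q i ⟨(j : ℕ) + 1, by omega⟩ := by
  simp [St.delta, hj, hi]

theorem dq_b_lt (i : Fin (m+1)) (j : Fin (n+1)) (hj : (j : ℕ) < n) (hi : (i : ℕ) < m) :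
    St.delta pos neg (.q i j) .b
      = if neg ⟨i, hi⟩ ⟨j, hj⟩ then .z0 else .q i ⟨(j : ℕ) + 1, by omega⟩ := by
  simp [St.delta, hj, hi]

theorem dq_a_m (i : Fin (m+1)) (j : Fin (n+1)) (hj : (j : ℕ) < n) (hi : ¬ (i : ℕ) < m) :
    St.delta pos neg (.q i j) .a = .q i ⟨(j : ℕ) + 1, by omega⟩ := by
  simp [St.delta, hj, hi]

theorem dq_b_m (i : Fin (m+1)) (j : Fin (n+1)) (hj : (j : ℕ) < n) (hi : ¬ (i : ℕ) < m) :
    St.delta pos neg (.q i j) .b = .q i ⟨(j : ℕ) + 1, by omega⟩ := by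
  simp [St.delta, hj, hi]

theorem dp_lt (i : Fin (m+1)) (j : Fin (n+1)) (hj : (j : ℕ) < n) (d : Letter3) :
    St.delta pos neg (.p i j) d = .p i ⟨(j : ℕ) + 1, by omega⟩ := by
  simp [St.delta, hj]

theorem dp_c (i : Fin (m+1)) (j : Fin (n+1)) (hj : ¬ (j : ℕ) < n) :
    St.delta pos neg (.p i j) .c = .q i ⟨0, Nat.succ_pos n⟩ := by
  simp [St.delta, hj]

theorem dp_a (i : Fin (m+1)) (j : Fin (n+1)) (hj : ¬ (j : ℕ) < n) :
    St.delta pos neg (.p i j) .a = .z0 := by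
  simp [St.delta, hj]

theorem dp_b (i : Fin (m+1)) (j : Fin (n+1)) (hj : ¬ (j : ℕ) < n) :
    St.delta pos neg (.p i j) .b = .z0 := by
  simp [St.delta, hj]

theorem dz (d : Letter3) : St.delta pos neg .z0 d = .z0 := rfl

/-- Case analysis of the action of `c` on any state. -/
theorem delta_c_cases (hn0 : 0 < n) (s : St m n) :
    St.delta pos neg s Letter3.c = St.z0 ∨
    (∃ i, St.delta pos neg s Letter3.c = St.q i ⟨0, Nat.succ_pos n⟩) ∨
    (∃ (i : Fin (m+1)) (j : Fin (n+1)), 1 ≤ (j : ℕ) ∧ St.delta pos neg s Letter3.c = St.p i j) := by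
  cases s with
  | q i j =>
    by_cases hj : (j : ℕ) < n
    · exact Or.inr (Or.inl ⟨i, dq_c_lt pos neg i j hj⟩)
    · by_cases hi : (i : ℕ) < m
      · exact Or.inr (Or.inl ⟨_, dq_c_hi pos neg i j hj hi⟩)
      · exact Or.inl (dq_c_z pos neg i j hj hi)
  | p i j =>
    by_cases hj : (j : ℕ) < n
    · exact Or.inr (Or.inr ⟨i, ⟨(j : ℕ) + 1, by omega⟩, Nat.succ_le_succ (Nat.zero_le _), dp_lt pos neg i j hj _⟩)
    · exact Or.inr (Or.inl ⟨i, dp_c pos neg i j hj⟩)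
  | z0 => exact Or.inl rfl

section Generic

variable (τ : Fin n → Bool)
variable {Q : Type*} (δ : Q → Letter3 → Q) (z : Q) (g : St m n → Q)
variable (hz1 : ∀ d, δ z d = z)
variable (h1 : ∀ s d, St.delta pos neg s d = St.z0 → δ (g s) d = z)
variable (h2 : ∀ s d, St.delta pos neg s d ≠ St.z0 →
    ¬(St.delta pos neg s d = St.q ⟨m, Nat.lt_succ_self m⟩ ⟨0, Nat.succ_pos n⟩ ∧ dropSet s) →
    δ (g s) d = g (St.delta pos neg s d))

set_option linter.unusedSectionVars false

include τ δ z g hz1 h1 h2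

/-- v-phase starting from q_{i,t+1} with a satisfying literal still ahead. -/
theorem gvq (i : Fin (m+1)) (hi : (i : ℕ) < m) (t : ℕ) (ht : t ≤ n)
    (hsat : ∃ j : Fin n, t ≤ (j : ℕ) ∧
      ((pos ⟨i, hi⟩ j = true ∧ τ j = true) ∨ (neg ⟨i, hi⟩ j = true ∧ τ j = false))) :
    runW δ (g (St.q i ⟨t, by omega⟩)) ((encWord τ).drop t ++ [Letter3.c]) = z := by
  obtain ⟨j, hjt, hjs⟩ := hsat
  have htn : t < n := lt_of_le_of_lt hjt j.isLt
  rw [encWord_drop_lt τ t htn]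
  by_cases hτt : τ ⟨t, htn⟩
  · rw [if_pos hτt]
    simp only [List.cons_append, runW]
    by_cases hp : pos ⟨i, hi⟩ ⟨t, htn⟩
    · have hd : St.delta pos neg (St.q i ⟨t, by omega⟩) .a = St.z0 := by
        rw [dq_a_lt pos neg i ⟨t, by omega⟩ htn hi, if_pos hp]
      rw [h1 _ _ hd]
      exact runW_fix δ z hz1 _
    · have hd : St.delta pos neg (St.q i ⟨t, by omega⟩) .a = St.q i ⟨t + 1, by omega⟩ := by
        rw [dq_a_lt pos neg i ⟨t, by omega⟩ htn hi, if_neg hp]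
      rw [h2 _ _ (by rw [hd]; simp) (by rw [hd]; simp [St.q.injEq, Fin.ext_iff]), hd]
      have hjt' : t + 1 ≤ (j : ℕ) := by
        rcases Nat.lt_or_ge t (j : ℕ) with h | h
        · omega
        · exfalso
          have hje : (j : ℕ) = t := by omega
          have hjeq : j = ⟨t, htn⟩ := Fin.ext (by simp [hje])
          rw [hjeq] at hjs
          rcases hjs with ⟨h1', _⟩ | ⟨_, h2'⟩
          · exact hp h1'
          · simp [hτt] at h2'
      exact gvq i hi (t + 1) (by omega) ⟨j, hjt', hjs⟩
  · rw [if_neg hτt]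
    simp only [List.cons_append, runW]
    by_cases hp : neg ⟨i, hi⟩ ⟨t, htn⟩
    · have hd : St.delta pos neg (St.q i ⟨t, by omega⟩) .b = St.z0 := by
        rw [dq_b_lt pos neg i ⟨t, by omega⟩ htn hi, if_pos hp]
      rw [h1 _ _ hd]
      exact runW_fix δ z hz1 _
    · have hd : St.delta pos neg (St.q i ⟨t, by omega⟩) .b = St.q i ⟨t + 1, by omega⟩ := by
        rw [dq_b_lt pos neg i ⟨t, by omega⟩ htn hi, if_neg hp]
      rw [h2 _ _ (by rw [hd]; simp) (by rw [hd]; simp [St.q.injEq, Fin.ext_iff]), hd]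
      have hjt' : t + 1 ≤ (j : ℕ) := by
        rcases Nat.lt_or_ge t (j : ℕ) with h | h
        · omega
        · exfalso
          have hje : (j : ℕ) = t := by omega
          have hjeq : j = ⟨t, htn⟩ := Fin.ext (by simp [hje])
          rw [hjeq] at hjs
          rcases hjs with ⟨_, h1'⟩ | ⟨h2', _⟩
          · simp [h1'] at hτt
          · exact hp h2'
      exact gvq i hi (t + 1) (by omega) ⟨j, hjt', hjs⟩
termination_by n - t

/-- v-phase starting from q_{m+1,t+1}. -/
theorem gvm (t : ℕ) (ht : t ≤ n) :
    runW δ (g (St.q ⟨m, Nat.lt_succ_self m⟩ ⟨t, by omega⟩)) ((encWord τ).drop t ++ [Letter3.c])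
      = z := by
  rcases eq_or_lt_of_le ht with he | hlt
  · subst he
    rw [encWord_drop_n]
    simp only [List.nil_append, runW]
    rw [h1 _ _ (dq_c_z pos neg _ _ (by simp) (by simp))]
  · rw [encWord_drop_lt τ t hlt]
    have step : ∀ d, St.delta pos neg (St.q ⟨m, Nat.lt_succ_self m⟩ ⟨t, by omega⟩) d
          = St.q ⟨m, Nat.lt_succ_self m⟩ ⟨t + 1, by omega⟩ →
        runW δ (δ (g (St.q ⟨m, Nat.lt_succ_self m⟩ ⟨t, by omega⟩)) d)
          ((encWord τ).drop (t + 1) ++ [Letter3.c]) = z := by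
      intro d hd
      rw [h2 _ _ (by rw [hd]; simp) (by rw [hd]; simp [St.q.injEq, Fin.ext_iff]), hd]
      exact gvm (t + 1) (by omega)
    by_cases hτt : τ ⟨t, hlt⟩
    · rw [if_pos hτt]
      simp only [List.cons_append, runW]
      exact step _ (dq_a_m pos neg _ _ hlt (by simp))
    · rw [if_neg hτt]
      simp only [List.cons_append, runW]
      exact step _ (dq_b_m pos neg _ _ hlt (by simp))
termination_by n - t

/-- v-phase starting from p_{i,j+1} with t < j letters already consumed. -/
theorem gpv (i : Fin (m+1)) (j : Fin (n+1)) (t : ℕ) (htj : t < (j : ℕ)) :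
    runW δ (g (St.p i j)) ((encWord τ).drop t ++ [Letter3.c]) = z := by
  have htn : t < n := by have := j.isLt; omega
  rw [encWord_drop_lt τ t htn]
  by_cases hj : (j : ℕ) < n
  · have key : ∀ d, St.delta pos neg (St.p i j) d = St.p i ⟨(j : ℕ) + 1, by omega⟩ →
        runW δ (δ (g (St.p i j)) d) ((encWord τ).drop (t + 1) ++ [Letter3.c]) = z := by
      intro d hd
      rw [h2 _ _ (by rw [hd]; simp) (by rw [hd]; simp), hd]
      exact gpv i ⟨(j : ℕ) + 1, by omega⟩ (t + 1) (by omega : t + 1 < (j : ℕ) + 1)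
    by_cases hτt : τ ⟨t, htn⟩
    · rw [if_pos hτt]; simp only [List.cons_append, runW]
      exact key _ (dp_lt pos neg i j hj _)
    · rw [if_neg hτt]; simp only [List.cons_append, runW]
      exact key _ (dp_lt pos neg i j hj _)
  · by_cases hτt : τ ⟨t, htn⟩
    · rw [if_pos hτt]; simp only [List.cons_append, runW]
      rw [h1 _ _ (dp_a pos neg i j hj)]
      exact runW_fix δ z hz1 _
    · rw [if_neg hτt]; simp only [List.cons_append, runW]
      rw [h1 _ _ (dp_b pos neg i j hj)]
      exact runW_fix δ z hz1 _
termination_by n - t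

/-- c-phase: q_{i,1} is fixed by c. -/
theorem gcq (hn0 : 0 < n) (i : Fin (m+1)) (t : ℕ) :
    runW δ (g (St.q i ⟨0, Nat.succ_pos n⟩)) (List.replicate t Letter3.c)
      = g (St.q i ⟨0, Nat.succ_pos n⟩) := by
  induction t with
  | zero => rfl
  | succ t ih =>
    rw [List.replicate_succ]
    simp only [runW]
    have hd := dq_c_lt pos neg i ⟨0, Nat.succ_pos n⟩ (by simpa using hn0)
    rw [h2 _ _ (by rw [hd]; simp) (by simp [dropSet]; omega), hd]
    exact ih

/-- c-phase: a p-state advances, falling to q_{i,1} when it passes p_{i,n+1}. -/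
theorem gcp (hn0 : 0 < n) (i : Fin (m+1)) (t : ℕ) : ∀ j : Fin (n+1),
    runW δ (g (St.p i j)) (List.replicate t Letter3.c)
      = if h : (j : ℕ) + t ≤ n then g (St.p i ⟨(j : ℕ) + t, by omega⟩)
        else g (St.q i ⟨0, Nat.succ_pos n⟩) := by
  induction t with
  | zero =>
    intro j
    rw [dif_pos (by omega)]
    simp only [List.replicate_zero]
    have : (⟨(j : ℕ) + 0, by omega⟩ : Fin (n+1)) = j := Fin.ext (by simp)
    rw [this]
    rfl
  | succ t ih =>
    intro j
    rw [List.replicate_succ]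
    simp only [runW]
    by_cases hj : (j : ℕ) < n
    · have hd := dp_lt pos neg i j hj Letter3.c
      rw [h2 _ _ (by rw [hd]; simp) (by rw [hd]; simp), hd, ih ⟨(j : ℕ) + 1, by omega⟩]
      have hv : ((⟨(j : ℕ) + 1, by omega⟩ : Fin (n + 1)) : ℕ) = (j : ℕ) + 1 := rfl
      simp only [hv]
      by_cases hle : (j : ℕ) + (t + 1) ≤ n
      · rw [dif_pos (by omega : (j : ℕ) + 1 + t ≤ n), dif_pos hle]
        exact congrArg g (congrArg (St.p i) (by rw [Fin.mk.injEq]; omega))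
      · rw [dif_neg (by omega), dif_neg hle]
    · have hd := dp_c pos neg i j hj
      rw [h2 _ _ (by rw [hd]; simp) (by rw [hd]; simp [dropSet]), hd,
        gcq pos neg τ δ z g hz1 h1 h2 hn0 i t, dif_neg (by omega)]

/-- v-phase plus final c from q_{i,1}, for any i. -/
theorem gq0 (hn0 : 0 < n) (hτ : ∀ i : Fin m, clauseSat pos neg τ i) (i : Fin (m+1)) :
    runW δ (g (St.q i ⟨0, Nat.succ_pos n⟩)) (encWord τ ++ [Letter3.c]) = z := by
  by_cases hi : (i : ℕ) < m
  · have := gvq pos neg τ δ z g hz1 h1 h2 i hi 0 (by omega)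
      (by obtain ⟨j, hj⟩ := hτ ⟨i, hi⟩; exact ⟨j, Nat.zero_le _, hj⟩)
    simpa using this
  · have him : (i : ℕ) = m := by have := i.isLt; omega
    have hie : i = ⟨m, Nat.lt_succ_self m⟩ := Fin.ext (by simp [him])
    rw [hie]
    have := gvm pos neg τ δ z g hz1 h1 h2 0 (by omega)
    simpa using this

/-- The master middle-phase lemma: any state of the form q_{i,1} or p_{i,j} with j ≥ 2
is sent to z by c^t · v(τ) · c. -/
theorem gmid (hn0 : 0 < n) (hτ : ∀ i : Fin m, clauseSat pos neg τ i) (t : ℕ) (s : St m n)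
    (hs : (∃ i, s = St.q i ⟨0, Nat.succ_pos n⟩) ∨
      (∃ (i : Fin (m+1)) (j : Fin (n+1)), 1 ≤ (j : ℕ) ∧ s = St.p i j)) :
    runW δ (g s) (List.replicate t Letter3.c ++ encWord τ ++ [Letter3.c]) = z := by
  rw [List.append_assoc, runW_append]
  rcases hs with ⟨i, rfl⟩ | ⟨i, j, hj, rfl⟩
  · rw [gcq pos neg τ δ z g hz1 h1 h2 hn0 i t]
    exact gq0 pos neg τ δ z g hz1 h1 h2 hn0 hτ i
  · rw [gcp pos neg τ δ z g hz1 h1 h2 hn0 i t j]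
    by_cases hle : (j : ℕ) + t ≤ n
    · rw [dif_pos hle]
      have := gpv pos neg τ δ z g hz1 h1 h2 i ⟨(j : ℕ) + t, by omega⟩ 0
        (by omega : 0 < (j : ℕ) + t)
      simpa using this
    · rw [dif_neg hle]
      exact gq0 pos neg τ δ z g hz1 h1 h2 hn0 hτ i

end Generic

theorem z0Iter_step (k : ℕ) (d : Letter3) :
    deltaIter pos neg k (z0Iter m n k) d = z0Iter m n k := by
  induction k with
  | zero => rfl
  | succ k ih => simp only [z0Iter, deltaIter, ih]; rfl

theorem runW_inl (k : ℕ) (s : QIter m n k) (w : List Letter3) :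
    runW (deltaIter pos neg (k + 1)) (Sum.inl s) w
      = Sum.inl (runW (deltaIter pos neg k) s w) := by
  induction w generalizing s with
  | nil => rfl
  | cons x xs ih => simp only [runW, deltaIter, ih]; rfl

theorem deltaIter_inr (k : ℕ) (q' : St' m n) (q'' : QIter m n k) (d : Letter3) :
    deltaIter pos neg (k + 1) (Sum.inr (q', q'')) d =
      if ht : St.delta pos neg q'.val d = St.z0 then Sum.inl (z0Iter m n k)
      else if St.delta pos neg q'.val d
          = St.q ⟨m, Nat.lt_succ_self m⟩ ⟨0, Nat.succ_pos n⟩ ∧ dropSet q'.val then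
        Sum.inl q''
      else Sum.inr (⟨St.delta pos neg q'.val d, ht⟩, q'') := rfl

theorem mainSync (hn : 2 < n) (τ : Fin n → Bool) (hτ : ∀ i : Fin m, clauseSat pos neg τ i)
    (k : ℕ) :
    ∀ s : QIter m n k,
      runW (deltaIter pos neg k) s
          (List.replicate (k + 1) Letter3.c ++ encWord τ ++ [Letter3.c])
        = z0Iter m n k := by
  have hn0 : 0 < n := by omega
  induction k with
  | zero =>
    intro s
    have hw : (List.replicate 1 Letter3.c ++ encWord τ ++ [Letter3.c])
        = Letter3.c :: (List.replicate 0 Letter3.c ++ encWord τ ++ [Letter3.c]) := by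
      simp
    rw [hw, runW_cons]
    show runW (St.delta pos neg) (St.delta pos neg s Letter3.c) _ = St.z0
    rcases delta_c_cases pos neg hn0 s with hd | hmid
    · rw [hd]
      exact runW_fix _ _ (dz pos neg) _
    · exact gmid pos neg τ (St.delta pos neg) St.z0 (fun s => s)
        (dz pos neg) (fun s d h => h) (fun s d _ _ => rfl) hn0 hτ 0
        (St.delta pos neg s Letter3.c) hmid
  | succ k ih =>
    intro s
    have hw : (List.replicate (k + 2) Letter3.c ++ encWord τ ++ [Letter3.c])
        = Letter3.c :: (List.replicate (k + 1) Letter3.c ++ encWord τ ++ [Letter3.c]) := by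
      simp [List.replicate_succ]
    rw [hw]
    cases s with
    | inl s' =>
      rw [runW_inl pos neg k s']
      show (Sum.inl (runW (deltaIter pos neg k) (deltaIter pos neg k s' Letter3.c)
          (List.replicate (k + 1) Letter3.c ++ encWord τ ++ [Letter3.c])) : QIter m n (k + 1))
        = z0Iter m n (k + 1)
      rw [ih (deltaIter pos neg k s' Letter3.c)]
      rfl
    | inr pr =>
      obtain ⟨q', q''⟩ := pr
      set g : St m n → QIter m n (k + 1) :=
        fun s => if h : s = St.z0 then z0Iter m n (k + 1) else Sum.inr (⟨s, h⟩, q'') with hg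
      have hz1 : ∀ d, deltaIter pos neg (k + 1) (z0Iter m n (k + 1)) d = z0Iter m n (k + 1) :=
        z0Iter_step pos neg (k + 1)
      have h1 : ∀ s d, St.delta pos neg s d = St.z0 →
          deltaIter pos neg (k + 1) (g s) d = z0Iter m n (k + 1) := by
        intro s d hd
        by_cases hs : s = St.z0
        · have e : g s = z0Iter m n (k + 1) := dif_pos hs
          rw [e]; exact hz1 d
        · have e : g s = (Sum.inr (⟨s, hs⟩, q'') : QIter m n (k + 1)) := dif_neg hs
          rw [e]
          rw [deltaIter_inr pos neg k ⟨s, hs⟩ q'' d, dif_pos hd]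
          rfl
      have h2 : ∀ s d, St.delta pos neg s d ≠ St.z0 →
          ¬(St.delta pos neg s d = St.q ⟨m, Nat.lt_succ_self m⟩ ⟨0, Nat.succ_pos n⟩
              ∧ dropSet s) →
          deltaIter pos neg (k + 1) (g s) d = g (St.delta pos neg s d) := by
        intro s d hd hc
        have hs : s ≠ St.z0 := by
          intro h; subst h; exact hd rfl
        have e1 : g s = (Sum.inr (⟨s, hs⟩, q'') : QIter m n (k + 1)) := dif_neg hs
        have e2 : g (St.delta pos neg s d)
            = (Sum.inr (⟨St.delta pos neg s d, hd⟩, q'') : QIter m n (k + 1)) := dif_neg hd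
        rw [e1, e2]
        rw [deltaIter_inr pos neg k ⟨s, hs⟩ q'' d, dif_neg hd, if_neg hc]
      refine (runW_cons _ _ _ _).trans ?_
      by_cases hz0 : St.delta pos neg q'.val Letter3.c = St.z0
      · rw [deltaIter_inr pos neg k q' q'' Letter3.c, dif_pos hz0, runW_inl,
          runW_fix _ _ (z0Iter_step pos neg k)]
        rfl
      · by_cases hdrop : St.delta pos neg q'.val Letter3.c
            = St.q ⟨m, Nat.lt_succ_self m⟩ ⟨0, Nat.succ_pos n⟩ ∧ dropSet q'.val
        · rw [deltaIter_inr pos neg k q' q'' Letter3.c, dif_neg hz0, if_pos hdrop,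
            runW_inl, ih q'']
          rfl
        · have hstep : deltaIter pos neg (k + 1) (Sum.inr (q', q'')) Letter3.c
              = g (St.delta pos neg q'.val Letter3.c) := by
            rw [deltaIter_inr pos neg k q' q'' Letter3.c, dif_neg hz0, if_neg hdrop, hg]
            have e : g (St.delta pos neg q'.val Letter3.c)
                = (Sum.inr (⟨St.delta pos neg q'.val Letter3.c, hz0⟩, q'') : QIter m n (k + 1)) :=
              dif_neg hz0
            exact e.symm
          rw [hstep]
          rcases delta_c_cases pos neg hn0 q'.val with hd | hmid
          · exact absurd hd hz0
          · exact gmid pos neg τ (deltaIter pos neg (k + 1)) (z0Iter m n (k + 1)) g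
              hz1 h1 h2 hn0 hτ (k + 1) _ hmid

end IterAux


/-- If ψ is satisfiable under τ, the word c^{r-1}·v(τ)·c of length n+r synchronizes
the iterated automaton A_r(ψ) (here r = k+3 ≥ 3, and A_r has state set `QIter m n (k+1)`),
sending every state to z₀. -/
theorem iterated_sat_sync
    {m n : ℕ} (hn : 2 < n) (pos neg : Fin m → Fin n → Bool)
    (τ : Fin n → Bool) (hτ : ∀ i : Fin m, clauseSat pos neg τ i) (k : ℕ) :
    (List.replicate (k + 2) Letter3.c ++ encWord τ ++ [Letter3.c]).length = n + (k + 3) ∧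
      ∀ s : QIter m n (k + 1),
        runW (deltaIter pos neg (k + 1)) s
            (List.replicate (k + 2) Letter3.c ++ encWord τ ++ [Letter3.c])
          = z0Iter m n (k + 1) := by
  constructor
  · simp [encWord]
    omega
  · intro s
    have := mainSync pos neg hn τ hτ (k + 1) s
    rw [show k + 1 + 1 = k + 2 from rfl] at this
    exact this
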